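/- arXiv:2405.18045 — 4 statements merged into one kernel-verified Lean document; each statement's English description precedes it below -/
import Mathlib

section
/- Let 1 < M ≤ d+1 and let φ: ℝ → ℝ be increasing and convex, ψ: ℝ → ℝ be increasing with x ↦ ψ(α·φ(x)) convex for every α > 0. Consider the symmetric loss L_sym(U,V) = ½(L_a(U,V) + L_a(V,U)) where L_a(U,V) = (1/M) Σ_{i=1}^M ψ( Σ_{j≠i} φ((v_j − v_i)·u_i) ), minimized over all tuples U = (u_1,…,u_M), V = (v_1,…,v_M) of unit vectors in ℝ^d. Then every configuration with u_i = v_i for all i and ⟨u_i, u_j⟩ = −1/(M−1) for all i ≠ j (i.e., U forms a regular (M−1)-simplex inscribed in the unit sphere) attains the minimum of L_sym. Moreover, if φ and ψ are strictly increasing and φ is strictly convex, these configurations are the only minimizers. -/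
open scoped BigOperators RealInnerProductSpace

noncomputable section

/-- Generic mini-batch contrastive loss `L_a(U,V;φ,ψ)`. -/
def La (d M : ℕ) (φ ψ : ℝ → ℝ)
    (U V : Fin M → EuclideanSpace ℝ (Fin d)) : ℝ :=
  (1 / (M : ℝ)) * ∑ i, ψ (∑ j ∈ Finset.univ.erase i, φ ⟪V j - V i, U i⟫)

/-- Symmetrised loss `L_sym(U,V) = ½(L_a(U,V) + L_a(V,U))`. -/
def LaSym (d M : ℕ) (φ ψ : ℝ → ℝ)
    (U V : Fin M → EuclideanSpace ℝ (Fin d)) : ℝ :=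
  (La d M φ ψ U V + La d M φ ψ V U) / 2

section AuxLemmas

lemma exists_simplex (d M : ℕ) (hM : 1 < M) (hMd : M ≤ d + 1) :
    ∃ W : Fin M → EuclideanSpace ℝ (Fin d), (∀ i, ‖W i‖ = 1) ∧
      (∀ i j, i ≠ j → ⟪W i, W j⟫ = -1 / ((M : ℝ) - 1)) := by
  have hM0 : (0:ℝ) < M := by positivity
  have hM1 : (0:ℝ) < (M:ℝ) - 1 := by
    have : (1:ℝ) < M := by exact_mod_cast hM
    linarith
  let ones : EuclideanSpace ℝ (Fin M) := WithLp.toLp 2 (fun _ => (1:ℝ))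
  let L : EuclideanSpace ℝ (Fin M) →ₗ[ℝ] ℝ :=
    { toFun := fun x => ∑ k, x k
      map_add' := by intro x y; exact Finset.sum_add_distrib
      map_smul' := by
        intro c x
        show (∑ k, (c • x) k) = c * ∑ k, x k
        rw [Finset.mul_sum]
        exact Finset.sum_congr rfl fun k _ => rfl }
  let K : Submodule ℝ (EuclideanSpace ℝ (Fin M)) := LinearMap.ker L
  have hLsurj : LinearMap.range L = ⊤ := by
    rw [LinearMap.range_eq_top]
    intro r
    refine ⟨WithLp.toLp 2 (fun _ => r / M), ?_⟩
    show ∑ _k : Fin M, r / (M:ℝ) = r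
    rw [Finset.sum_const, Finset.card_univ, Fintype.card_fin, nsmul_eq_mul]
    field_simp
  have hK : Module.finrank ℝ K = M - 1 := by
    have h := LinearMap.finrank_range_add_finrank_ker L
    rw [hLsurj, finrank_top, Module.finrank_self, finrank_euclideanSpace,
      Fintype.card_fin] at h
    show Module.finrank ℝ (LinearMap.ker L) = M - 1
    omega
  have hKd : Module.finrank ℝ K ≤ d := by omega
  let c : ℝ := Real.sqrt ((M:ℝ) / ((M:ℝ) - 1))
  let p : Fin M → EuclideanSpace ℝ (Fin M) :=
    fun i => c • (EuclideanSpace.single i (1:ℝ) - ((M:ℝ)⁻¹) • ones)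
  have hco : ∀ i k : Fin M, (p i) k = c * ((if k = i then (1:ℝ) else 0) - (M:ℝ)⁻¹) := by
    intro i k
    simp [p, ones, EuclideanSpace.single_apply, PiLp.smul_apply, PiLp.sub_apply,
      Pi.sub_apply, Pi.smul_apply, smul_eq_mul, mul_one]
  have hpK : ∀ i, p i ∈ K := by
    intro i
    show L (p i) = 0
    calc L (p i) = ∑ k, (p i) k := rfl
      _ = ∑ k, c * ((if k = i then (1:ℝ) else 0) - (M:ℝ)⁻¹) :=
          Finset.sum_congr rfl fun k _ => hco i k
      _ = 0 := by
          rw [← Finset.mul_sum, Finset.sum_sub_distrib]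
          simp only [Finset.sum_ite_eq, Finset.mem_univ, if_pos, Finset.sum_const,
            Finset.card_univ, Fintype.card_fin, nsmul_eq_mul]
          field_simp
          simp
  have hc2 : c * c = (M:ℝ) / ((M:ℝ) - 1) :=
    Real.mul_self_sqrt (by positivity)
  have hinner_ones : ∀ i : Fin M, ⟪EuclideanSpace.single i (1:ℝ), ones⟫ = 1 := by
    intro i
    simp [EuclideanSpace.inner_single_left, ones]
  have hinner_ones' : ∀ i : Fin M, ⟪ones, EuclideanSpace.single i (1:ℝ)⟫ = 1 := by
    intro i
    rw [real_inner_comm]; exact hinner_ones i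
  have hinner_onesones : ⟪ones, ones⟫ = (M:ℝ) := by
    simp [PiLp.inner_apply, ones, Finset.sum_const, Finset.card_univ, Fintype.card_fin]
    rw [EuclideanSpace.norm_eq]; simp [Real.sq_sqrt]
  have hpinner : ∀ i j : Fin M, ⟪p i, p j⟫
      = ((M:ℝ)/((M:ℝ)-1)) * ((if i = j then (1:ℝ) else 0) - (M:ℝ)⁻¹) := by
    intro i j
    have hsingle : ⟪EuclideanSpace.single i (1:ℝ), EuclideanSpace.single j (1:ℝ)⟫
        = (if i = j then (1:ℝ) else 0) := by
      simp only [EuclideanSpace.inner_single_left, map_one, one_mul,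
        EuclideanSpace.single_apply]
    simp only [p, real_inner_smul_left, real_inner_smul_right, inner_sub_left, inner_sub_right]
    rw [hsingle, hinner_ones, hinner_ones', hinner_onesones]
    have hMM : (M:ℝ)⁻¹ * (M:ℝ) = 1 := by field_simp
    rw [hMM]
    set t := (if i = j then (1:ℝ) else 0) with ht
    linear_combination (t - (M:ℝ)⁻¹) * hc2
  let b := stdOrthonormalBasis ℝ K
  let emb : Fin (Module.finrank ℝ K) → Fin d := fun k => Fin.castLE hKd k
  have hembinj : Function.Injective emb := fun a b h =>
    Fin.ext (by simpa [emb] using congrArg Fin.val h)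
  let v : Fin (Module.finrank ℝ K) → EuclideanSpace ℝ (Fin d) :=
    fun k => EuclideanSpace.single (emb k) (1:ℝ)
  have hv : Orthonormal ℝ v := (EuclideanSpace.orthonormal_single (𝕜 := ℝ)).comp emb hembinj
  let T : K → EuclideanSpace ℝ (Fin d) := fun x => ∑ k, b.repr x k • v k
  have hT : ∀ x y : K, ⟪T x, T y⟫ = ⟪(x:EuclideanSpace ℝ (Fin M)), (y:EuclideanSpace ℝ (Fin M))⟫ := by
    intro x y
    rw [show T x = ∑ k ∈ Finset.univ, b.repr x k • v k from rfl,
      show T y = ∑ k ∈ Finset.univ, b.repr y k • v k from rfl, hv.inner_sum]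
    simp only [conj_trivial]
    have e1 : (⟪b.repr x, b.repr y⟫:ℝ) = ∑ k, b.repr x k * b.repr y k := by
      simp only [PiLp.inner_apply, RCLike.inner_apply, conj_trivial]
      exact Finset.sum_congr rfl fun k _ => mul_comm _ _
    rw [← e1, b.repr.inner_map_map x y]
    exact Submodule.coe_inner K x y
  refine ⟨fun i => T ⟨p i, hpK i⟩, ?_, ?_⟩
  · intro i
    have h := hT ⟨p i, hpK i⟩ ⟨p i, hpK i⟩
    rw [hpinner i i, if_pos rfl] at h
    have hval : ⟪T ⟨p i, hpK i⟩, T ⟨p i, hpK i⟩⟫ = 1 := by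
      rw [h]; field_simp
    have h2 := real_inner_self_eq_norm_sq (T ⟨p i, hpK i⟩)
    rw [hval] at h2
    nlinarith [norm_nonneg (T ⟨p i, hpK i⟩)]
  · intro i j hij
    have h := hT ⟨p i, hpK i⟩ ⟨p j, hpK j⟩
    rw [hpinner i j, if_neg hij] at h
    rw [h]
    field_simp
    ring

variable {d M : ℕ} {φ ψ : ℝ → ℝ}

/-- value at an aligned simplex -/
lemma LaSym_simplex (hM : 1 < M)
    (U V : Fin M → EuclideanSpace ℝ (Fin d))
    (hU : ∀ i, ‖U i‖ = 1) (hUV : ∀ i, U i = V i)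
    (hsimp : ∀ i j, i ≠ j → ⟪U i, U j⟫ = -1 / ((M : ℝ) - 1)) :
    LaSym d M φ ψ U V = ψ (((M:ℝ) - 1) * φ (-(M:ℝ) / ((M:ℝ) - 1))) := by
  have hM0 : (0:ℝ) < M := by positivity
  have hM1 : (0:ℝ) < (M:ℝ) - 1 := by
    have : (1:ℝ) < M := by exact_mod_cast hM
    linarith
  have hcard : ∀ i : Fin M, (Finset.univ.erase i).card = M - 1 := by
    intro i
    rw [Finset.card_erase_of_mem (Finset.mem_univ i), Finset.card_univ, Fintype.card_fin]
  have hcardR : ∀ i : Fin M, ((Finset.univ.erase i).card : ℝ) = (M:ℝ) - 1 := by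
    intro i
    rw [hcard i, Nat.cast_sub hM.le, Nat.cast_one]
  have hcore : ∀ i j : Fin M, j ≠ i → ⟪U j - U i, U i⟫ = -(M:ℝ) / ((M:ℝ) - 1) := by
    intro i j hji
    have h1 : ⟪U i, U i⟫ = 1 := by
      rw [real_inner_self_eq_norm_sq, hU i]; norm_num
    rw [inner_sub_left, hsimp j i hji, h1]
    field_simp
    ring
  have hx : ∀ i j : Fin M, j ≠ i → ⟪V j - V i, U i⟫ = -(M:ℝ) / ((M:ℝ) - 1) := by
    intro i j hji
    rw [← hUV j, ← hUV i]
    exact hcore i j hji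
  have hLa : ∀ (A B : Fin M → EuclideanSpace ℝ (Fin d)),
      (∀ i j : Fin M, j ≠ i → ⟪B j - B i, A i⟫ = -(M:ℝ) / ((M:ℝ) - 1)) →
      La d M φ ψ A B = ψ (((M:ℝ) - 1) * φ (-(M:ℝ) / ((M:ℝ) - 1))) := by
    intro A B hAB
    unfold La
    have hinner : ∀ i : Fin M,
        (∑ j ∈ Finset.univ.erase i, φ ⟪B j - B i, A i⟫)
          = ((M:ℝ) - 1) * φ (-(M:ℝ) / ((M:ℝ) - 1)) := by
      intro i
      rw [Finset.sum_congr rfl (fun j hj => by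
        rw [hAB i j (Finset.ne_of_mem_erase hj)])]
      rw [Finset.sum_const, nsmul_eq_mul, hcardR i]
    rw [Finset.sum_congr rfl (fun i _ => by rw [hinner i])]
    rw [Finset.sum_const, nsmul_eq_mul, Finset.card_univ, Fintype.card_fin]
    field_simp
  have hxy : ∀ i j : Fin M, j ≠ i → ⟪U j - U i, V i⟫ = -(M:ℝ) / ((M:ℝ) - 1) := by
    intro i j hji
    rw [← hUV i]
    exact hcore i j hji
  unfold LaSym
  rw [hLa U V (fun i j hji => hx i j hji), hLa V U (fun i j hji => hxy i j hji)]
  ring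

set_option maxHeartbeats 1000000 in
/-- master bound + equality analysis -/
lemma master (hM : 1 < M)
    (hφmono : Monotone φ) (hφconv : ConvexOn ℝ Set.univ φ)
    (hψmono : Monotone ψ)
    (hψφconv : ∀ α : ℝ, 0 < α → ConvexOn ℝ Set.univ (fun x => ψ (α * φ x)))
    (U V : Fin M → EuclideanSpace ℝ (Fin d))
    (hU : ∀ i, ‖U i‖ = 1) (hV : ∀ i, ‖V i‖ = 1) :
    ψ (((M:ℝ) - 1) * φ (-(M:ℝ) / ((M:ℝ) - 1))) ≤ LaSym d M φ ψ U V ∧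
    (LaSym d M φ ψ U V = ψ (((M:ℝ) - 1) * φ (-(M:ℝ) / ((M:ℝ) - 1))) →
      StrictMono φ → StrictMono ψ → StrictConvexOn ℝ Set.univ φ →
      (∀ i, U i = V i) ∧ (∀ i j, i ≠ j → ⟪U i, U j⟫ = -1 / ((M : ℝ) - 1))) := by
  classical
  have hM0 : (0:ℝ) < M := by positivity
  have hn : (0:ℝ) < (M:ℝ) - 1 := by
    have : (1:ℝ) < M := by exact_mod_cast hM
    linarith
  set n : ℝ := (M:ℝ) - 1 with hn_def
  set g : ℝ → ℝ := fun t => ψ (n * φ t) with hg_def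
  have hgconv : ConvexOn ℝ Set.univ g := hψφconv n hn
  have hgmono : Monotone g := fun a b hab =>
    hψmono (mul_le_mul_of_nonneg_left (hφmono hab) hn.le)
  have hcardR : ∀ i : Fin M, ((Finset.univ.erase i).card : ℝ) = n := by
    intro i
    rw [Finset.card_erase_of_mem (Finset.mem_univ i), Finset.card_univ, Fintype.card_fin,
      Nat.cast_sub hM.le, Nat.cast_one]
  -- abbreviations
  set X : Fin M → Fin M → ℝ := fun i j => ⟪V j - V i, U i⟫ with hX_def
  set Y : Fin M → Fin M → ℝ := fun i j => ⟪U j - U i, V i⟫ with hY_def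
  set SX : Fin M → ℝ := fun i => ∑ j ∈ Finset.univ.erase i, X i j with hSX_def
  set SY : Fin M → ℝ := fun i => ∑ j ∈ Finset.univ.erase i, Y i j with hSY_def
  set cX : Fin M → ℝ := fun i => SX i / n with hcX_def
  set cY : Fin M → ℝ := fun i => SY i / n with hcY_def
  set cbar : ℝ := (∑ i, cX i + ∑ i, cY i) / (2 * M) with hcbar_def
  -- step 1 : inner Jensen
  have hJX : ∀ (A B : Fin M → EuclideanSpace ℝ (Fin d)) (i : Fin M),
      n * φ ((∑ j ∈ Finset.univ.erase i, ⟪B j - B i, A i⟫) / n)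
        ≤ ∑ j ∈ Finset.univ.erase i, φ ⟪B j - B i, A i⟫ := by
    intro A B i
    have h := hφconv.map_sum_le (t := Finset.univ.erase i)
      (w := fun _ => 1 / n) (p := fun j => ⟪B j - B i, A i⟫)
      (fun _ _ => by positivity)
      (by rw [Finset.sum_const, nsmul_eq_mul, hcardR i]; field_simp)
      (fun _ _ => Set.mem_univ _)
    simp only [smul_eq_mul, ← Finset.mul_sum] at h
    have e1 : (1 / n) * ∑ j ∈ Finset.univ.erase i, ⟪B j - B i, A i⟫
        = (∑ j ∈ Finset.univ.erase i, ⟪B j - B i, A i⟫) / n := by ring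
    rw [e1] at h
    calc n * φ ((∑ j ∈ Finset.univ.erase i, ⟪B j - B i, A i⟫) / n)
        ≤ n * ((1 / n) * ∑ j ∈ Finset.univ.erase i, φ ⟪B j - B i, A i⟫) :=
          mul_le_mul_of_nonneg_left h hn.le
      _ = ∑ j ∈ Finset.univ.erase i, φ ⟪B j - B i, A i⟫ := by field_simp
  have hstep1X : ∀ i, g (cX i) ≤ ψ (∑ j ∈ Finset.univ.erase i, φ (X i j)) := by
    intro i
    exact hψmono (hJX U V i)
  have hstep1Y : ∀ i, g (cY i) ≤ ψ (∑ j ∈ Finset.univ.erase i, φ (Y i j)) := by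
    intro i
    exact hψmono (hJX V U i)
  -- step 2 : outer Jensen over 2M points
  have hsum2M : ∑ _x : Fin M ⊕ Fin M, (1 / (2 * (M:ℝ))) = 1 := by
    rw [Finset.sum_const, nsmul_eq_mul, Finset.card_univ, Fintype.card_sum, Fintype.card_fin]
    push_cast
    field_simp
    ring
  have hJouter : g cbar ≤ (1 / (2 * (M:ℝ))) * (∑ i, g (cX i) + ∑ i, g (cY i)) := by
    have h := hgconv.map_sum_le (t := (Finset.univ : Finset (Fin M ⊕ Fin M)))
      (w := fun _ => 1 / (2 * (M:ℝ))) (p := Sum.elim cX cY)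
      (fun _ _ => by positivity) hsum2M (fun _ _ => Set.mem_univ _)
    simp only [smul_eq_mul, ← Finset.mul_sum] at h
    rw [Fintype.sum_sum_type, Fintype.sum_sum_type] at h
    simp only [Sum.elim_inl, Sum.elim_inr] at h
    have e : (1 / (2 * (M:ℝ))) * (∑ i, cX i + ∑ i, cY i) = cbar := by
      rw [hcbar_def]; ring
    rw [e] at h
    exact h
  -- step 3 : the mean bound
  set sU : EuclideanSpace ℝ (Fin d) := ∑ i, U i with hsU_def
  set sV : EuclideanSpace ℝ (Fin d) := ∑ i, V i with hsV_def
  have hSXf : ∀ i, SX i = ⟪sV, U i⟫ - (M:ℝ) * ⟪V i, U i⟫ := by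
    intro i
    have hXj : ∀ j, X i j = ⟪V j, U i⟫ - ⟪V i, U i⟫ := by
      intro j; rw [hX_def]; exact inner_sub_left _ _ _
    calc SX i = ∑ j ∈ Finset.univ.erase i, (⟪V j, U i⟫ - ⟪V i, U i⟫) :=
          Finset.sum_congr rfl fun j _ => hXj j
      _ = (∑ j ∈ Finset.univ.erase i, ⟪V j, U i⟫) - n * ⟪V i, U i⟫ := by
          rw [Finset.sum_sub_distrib, Finset.sum_const, nsmul_eq_mul, hcardR i]
      _ = ((∑ j, ⟪V j, U i⟫) - ⟪V i, U i⟫) - n * ⟪V i, U i⟫ := by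
          rw [Finset.sum_erase_eq_sub (Finset.mem_univ i)]
      _ = ⟪sV, U i⟫ - (M:ℝ) * ⟪V i, U i⟫ := by
          rw [hsV_def, sum_inner, hn_def]
          ring
  have hSYf : ∀ i, SY i = ⟪sU, V i⟫ - (M:ℝ) * ⟪U i, V i⟫ := by
    intro i
    have hYj : ∀ j, Y i j = ⟪U j, V i⟫ - ⟪U i, V i⟫ := by
      intro j; rw [hY_def]; exact inner_sub_left _ _ _
    calc SY i = ∑ j ∈ Finset.univ.erase i, (⟪U j, V i⟫ - ⟪U i, V i⟫) :=
          Finset.sum_congr rfl fun j _ => hYj j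
      _ = (∑ j ∈ Finset.univ.erase i, ⟪U j, V i⟫) - n * ⟪U i, V i⟫ := by
          rw [Finset.sum_sub_distrib, Finset.sum_const, nsmul_eq_mul, hcardR i]
      _ = ((∑ j, ⟪U j, V i⟫) - ⟪U i, V i⟫) - n * ⟪U i, V i⟫ := by
          rw [Finset.sum_erase_eq_sub (Finset.mem_univ i)]
      _ = ⟪sU, V i⟫ - (M:ℝ) * ⟪U i, V i⟫ := by
          rw [hsU_def, sum_inner, hn_def]
          ring
  set t : ℝ := ∑ i, ⟪U i, V i⟫ with ht_def
  have hsumSX : ∑ i, SX i = ⟪sV, sU⟫ - (M:ℝ) * t := by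
    calc ∑ i, SX i = ∑ i, (⟪sV, U i⟫ - (M:ℝ) * ⟪V i, U i⟫) :=
          Finset.sum_congr rfl fun i _ => hSXf i
      _ = (∑ i, ⟪sV, U i⟫) - (M:ℝ) * ∑ i, ⟪V i, U i⟫ := by
          rw [Finset.sum_sub_distrib, Finset.mul_sum]
      _ = ⟪sV, sU⟫ - (M:ℝ) * t := by
          rw [hsU_def, inner_sum, ht_def]
          congr 2
          exact Finset.sum_congr rfl fun i _ => real_inner_comm _ _
  have hsumSY : ∑ i, SY i = ⟪sU, sV⟫ - (M:ℝ) * t := by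
    calc ∑ i, SY i = ∑ i, (⟪sU, V i⟫ - (M:ℝ) * ⟪U i, V i⟫) :=
          Finset.sum_congr rfl fun i _ => hSYf i
      _ = (∑ i, ⟪sU, V i⟫) - (M:ℝ) * ∑ i, ⟪U i, V i⟫ := by
          rw [Finset.sum_sub_distrib, Finset.mul_sum]
      _ = ⟪sU, sV⟫ - (M:ℝ) * t := by
          rw [hsV_def, inner_sum, ht_def]
  set P : ℝ := ‖sU‖^2 + ‖sV‖^2 with hP_def
  set Q : ℝ := ‖sU - sV‖^2 with hQ_def
  set R : ℝ := ∑ i, ‖U i - V i‖^2 with hR_def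
  have hPQ : 2 * ⟪sU, sV⟫ = P - Q := by
    have := norm_sub_sq_real sU sV
    rw [hP_def, hQ_def]; linarith
  have hQR : Q ≤ (M:ℝ) * R := by
    have h1 : sU - sV = ∑ i, (U i - V i) := by
      rw [hsU_def, hsV_def, Finset.sum_sub_distrib]
    have h2 : ‖sU - sV‖ ≤ ∑ i, ‖U i - V i‖ := by
      rw [h1]; exact norm_sum_le _ _
    have h3 : (∑ i, ‖U i - V i‖)^2 ≤ (M:ℝ) * R := by
      have hcs := Finset.sum_mul_sq_le_sq_mul_sq Finset.univ (fun _ => (1:ℝ))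
        (fun i => ‖U i - V i‖)
      simp only [one_mul, one_pow, Finset.sum_const, nsmul_eq_mul, Finset.card_univ,
        Fintype.card_fin, mul_one] at hcs
      rw [hR_def]
      exact hcs
    calc Q = ‖sU - sV‖^2 := rfl
      _ ≤ (∑ i, ‖U i - V i‖)^2 := by
          apply pow_le_pow_left₀ (norm_nonneg _) h2
      _ ≤ (M:ℝ) * R := h3
  have hRt : R = 2 * M - 2 * t := by
    calc R = ∑ i, ((2:ℝ) - 2 * ⟪U i, V i⟫) := by
          refine Finset.sum_congr rfl fun i _ => ?_
          have h := norm_sub_sq_real (U i) (V i)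
          rw [hU i, hV i] at h
          rw [h]; ring
      _ = (∑ _i : Fin M, (2:ℝ)) - 2 * t := by
          rw [Finset.sum_sub_distrib, ht_def, Finset.mul_sum]
      _ = 2 * M - 2 * t := by
          rw [Finset.sum_const, nsmul_eq_mul, Finset.card_univ, Fintype.card_fin]
          ring
  have hPnonneg : 0 ≤ P := by positivity
  have hkey : ∑ i, SX i + ∑ i, SY i = P - Q + (M:ℝ) * R - 2 * (M:ℝ)^2 := by
    rw [hsumSX, hsumSY]
    have h2 : (M:ℝ) * R = 2 * (M:ℝ)^2 - 2 * (M:ℝ) * t := by rw [hRt]; ring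
    linarith [hPQ, h2, real_inner_comm sV sU]
  have hmean_lb : -2 * (M:ℝ)^2 ≤ ∑ i, SX i + ∑ i, SY i := by
    rw [hkey]
    nlinarith [hPnonneg, hQR, hM0]
  have hcbar_ge : -(M:ℝ) / n ≤ cbar := by
    rw [hcbar_def, hcX_def, hcY_def]
    simp only
    rw [← Finset.sum_div, ← Finset.sum_div, ← add_div, div_div]
    rw [div_le_div_iff₀ (by positivity) (by positivity)]
    calc -(M:ℝ) * (n * (2 * M)) = (-2 * (M:ℝ)^2) * n := by ring
      _ ≤ (∑ i, SX i + ∑ i, SY i) * n := by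
          apply mul_le_mul_of_nonneg_right hmean_lb hn.le
  -- assemble bound
  have hLaSym_eq : LaSym d M φ ψ U V
      = (1 / (2 * (M:ℝ))) * (∑ i, ψ (∑ j ∈ Finset.univ.erase i, φ (X i j))
        + ∑ i, ψ (∑ j ∈ Finset.univ.erase i, φ (Y i j))) := by
    unfold LaSym La
    rw [hX_def, hY_def]
    ring
  have hA12 : (1 / (2 * (M:ℝ))) * (∑ i, g (cX i) + ∑ i, g (cY i))
      ≤ LaSym d M φ ψ U V := by
    rw [hLaSym_eq]
    apply mul_le_mul_of_nonneg_left _ (by positivity)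
    apply add_le_add
    · exact Finset.sum_le_sum fun i _ => hstep1X i
    · exact Finset.sum_le_sum fun i _ => hstep1Y i
  have hB3 : g (-(M:ℝ)/n) ≤ g cbar := hgmono hcbar_ge
  have hbound : ψ (n * φ (-(M:ℝ) / n)) ≤ LaSym d M φ ψ U V :=
    le_trans (le_trans hB3 hJouter) hA12
  constructor
  · exact hbound
  · intro heq hφs hψs hφsc
    -- all inequalities are equalities
    have hA2_eq : (1 / (2 * (M:ℝ))) * (∑ i, g (cX i) + ∑ i, g (cY i))
        = LaSym d M φ ψ U V := le_antisymm hA12 (by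
          rw [heq]
          exact le_trans hB3 hJouter)
    have hcbar_eq : cbar = -(M:ℝ)/n := by
      by_contra hne
      have hlt : -(M:ℝ)/n < cbar := lt_of_le_of_ne hcbar_ge (Ne.symm hne)
      have hglt : g (-(M:ℝ)/n) < g cbar := by
        apply hψs
        apply (mul_lt_mul_iff_right₀ hn).mpr
        exact hφs hlt
      have : LaSym d M φ ψ U V > ψ (n * φ (-(M:ℝ)/n)) :=
        lt_of_lt_of_le (lt_of_lt_of_le hglt hJouter) hA12
      rw [heq] at this
      exact lt_irrefl _ this
    -- from cbar equality : P = 0 and M R = Q, hence U = V and sU = 0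
    have hsum_eq : ∑ i, SX i + ∑ i, SY i = -2 * (M:ℝ)^2 := by
      have h1 : (∑ i, SX i + ∑ i, SY i) / n = cbar * (2 * M) := by
        rw [hcbar_def]
        simp only [hcX_def, hcY_def]
        rw [← Finset.sum_div, ← Finset.sum_div, ← add_div,
          div_mul_cancel₀ _ (ne_of_gt (by positivity : (0:ℝ) < 2 * (M:ℝ)))]
      have h2 : (∑ i, SX i + ∑ i, SY i) = cbar * (2*M) * n := by
        rw [← h1]; field_simp
      rw [h2, hcbar_eq, div_mul_eq_mul_div, div_mul_cancel₀ _ (ne_of_gt hn)]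
      ring
    have hPQR : P + ((M:ℝ) * R - Q) = 0 := by
      rw [hkey] at hsum_eq
      linarith
    have hP0 : P = 0 := by linarith [hPnonneg, hQR]
    have hQMR : (M:ℝ) * R = Q := by linarith
    have hPP : ‖sU‖^2 + ‖sV‖^2 = 0 := by rw [← hP_def]; exact hP0
    have hsU0 : sU = 0 := by
      have h3 : ‖sU‖^2 = 0 :=
        le_antisymm (by linarith [sq_nonneg ‖sV‖]) (sq_nonneg ‖sU‖)
      have h4 : ‖sU‖ = 0 := pow_eq_zero_iff (by norm_num : (2:ℕ) ≠ 0) |>.mp h3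
      exact norm_eq_zero.mp h4
    have hsV0 : sV = 0 := by
      have h3 : ‖sV‖^2 = 0 :=
        le_antisymm (by linarith [sq_nonneg ‖sU‖]) (sq_nonneg ‖sV‖)
      have h4 : ‖sV‖ = 0 := pow_eq_zero_iff (by norm_num : (2:ℕ) ≠ 0) |>.mp h3
      exact norm_eq_zero.mp h4
    have hQ0 : Q = 0 := by
      rw [hQ_def, hsU0, hsV0]
      simp
    have hR0 : R = 0 := by
      have : (M:ℝ) * R = 0 := by rw [hQMR, hQ0]
      exact (mul_eq_zero.mp this).resolve_left (by positivity)
    have hUV : ∀ i, U i = V i := by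
      intro i
      have h1 : ∑ i, ‖U i - V i‖^2 = 0 := by rw [← hR_def]; exact hR0
      have h2 : ‖U i - V i‖^2 = 0 := by
        have := (Finset.sum_eq_zero_iff_of_nonneg
          (fun j _ => by positivity : ∀ j ∈ Finset.univ, (0:ℝ) ≤ ‖U j - V j‖^2)).mp h1
        exact this i (Finset.mem_univ i)
      have h3 := pow_eq_zero_iff (by norm_num : (2:ℕ) ≠ 0) |>.mp h2
      rw [norm_eq_zero, sub_eq_zero] at h3
      exact h3
    refine ⟨hUV, ?_⟩
    -- now the termwise equality
    have htermwise : ∀ i, ψ (∑ j ∈ Finset.univ.erase i, φ (X i j)) = g (cX i) := by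
      have hsum0 : ∑ i, ((ψ (∑ j ∈ Finset.univ.erase i, φ (X i j)) - g (cX i))
          + (ψ (∑ j ∈ Finset.univ.erase i, φ (Y i j)) - g (cY i))) = 0 := by
        have expand : ∑ i, ((ψ (∑ j ∈ Finset.univ.erase i, φ (X i j)) - g (cX i))
            + (ψ (∑ j ∈ Finset.univ.erase i, φ (Y i j)) - g (cY i)))
            = (∑ i, ψ (∑ j ∈ Finset.univ.erase i, φ (X i j))
              + ∑ i, ψ (∑ j ∈ Finset.univ.erase i, φ (Y i j)))
              - (∑ i, g (cX i) + ∑ i, g (cY i)) := by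
          rw [Finset.sum_add_distrib, Finset.sum_sub_distrib, Finset.sum_sub_distrib]
          ring
        rw [expand]
        have h2 := hA2_eq
        rw [hLaSym_eq] at h2
        have hM2 : (0:ℝ) < 1 / (2 * (M:ℝ)) := by positivity
        have := mul_left_cancel₀ (ne_of_gt hM2) h2
        linarith
      intro i
      have hnn : ∀ i ∈ Finset.univ, (0:ℝ) ≤ (ψ (∑ j ∈ Finset.univ.erase i, φ (X i j)) - g (cX i))
          + (ψ (∑ j ∈ Finset.univ.erase i, φ (Y i j)) - g (cY i)) := by
        intro i _
        have := hstep1X i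
        have := hstep1Y i
        linarith
      have := (Finset.sum_eq_zero_iff_of_nonneg hnn).mp hsum0 i (Finset.mem_univ i)
      have h1 := hstep1X i
      have h2 := hstep1Y i
      linarith
    -- hence per-i equality in Jensen with strict convexity
    intro i j hij
    have hiuv : ⟪U i, U i⟫ = 1 := by
      rw [real_inner_self_eq_norm_sq, hU i]; norm_num
    -- cX i = -M/n
    have hcXi : cX i = -(M:ℝ)/n := by
      simp only [hcX_def]
      rw [hSXf i]
      have hVU : V i = U i := (hUV i).symm
      have hsV0' : (⟪sV, U i⟫ : ℝ) = 0 := by rw [hsV0]; exact inner_zero_left _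
      rw [hsV0', hVU, hiuv]
      field_simp
      ring
    -- Jensen equality gives all X i j equal
    have hSiX : ∑ l ∈ Finset.univ.erase i, φ (X i l) = n * φ (cX i) := by
      have h1 := htermwise i
      rw [hg_def] at h1
      exact hψs.injective h1
    have hallXeq : ∀ l ∈ Finset.univ.erase i, ∀ k ∈ Finset.univ.erase i,
        X i l = X i k := by
      refine hφsc.eq_of_le_map_sum (w := fun _ => 1/n) (p := fun l => X i l)
        (t := Finset.univ.erase i)
        (fun _ _ => by positivity)
        (by rw [Finset.sum_const, nsmul_eq_mul, hcardR i]; field_simp)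
        (fun _ _ => Set.mem_univ _) ?_
      -- h_eq : ∑ w • φ(p) ≤ φ (∑ w • p)
      have e1 : ∑ l ∈ Finset.univ.erase i, (1/n) • φ (X i l) = φ (cX i) := by
        simp only [smul_eq_mul, ← Finset.mul_sum]
        rw [hSiX]
        field_simp
      have e2 : ∑ l ∈ Finset.univ.erase i, (1/n) • (X i l) = cX i := by
        simp only [smul_eq_mul, ← Finset.mul_sum, hcX_def, hSX_def]
        field_simp
      rw [e1, e2]
    -- each X i l equals the mean cX i
    have hXmean : X i j = cX i := by
      have hjmem : j ∈ Finset.univ.erase i := by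
        rw [Finset.mem_erase]
        exact ⟨Ne.symm hij, Finset.mem_univ j⟩
      have hconst : ∀ l ∈ Finset.univ.erase i, X i l = X i j :=
        fun l hl => hallXeq l hl j hjmem
      have hSXn : SX i = n * X i j := by
        calc SX i = ∑ l ∈ Finset.univ.erase i, X i j :=
              Finset.sum_congr rfl hconst
          _ = n * X i j := by
              rw [Finset.sum_const, nsmul_eq_mul, hcardR i]
      simp only [hcX_def]
      rw [hSXn]
      field_simp
    -- conclude
    have hXij : X i j = -(M:ℝ)/n := by rw [hXmean, hcXi]
    have : ⟪U j, U i⟫ - 1 = -(M:ℝ)/n := by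
      rw [hX_def] at hXij
      simp only at hXij
      rw [← hUV j, ← hUV i, inner_sub_left, hiuv] at hXij
      linarith [hXij]
    rw [real_inner_comm]
    rw [hn_def] at this ⊢
    have hMn : (M:ℝ) = ((M:ℝ) - 1) + 1 := by ring
    field_simp at this ⊢
    have hne : (M:ℝ) - 1 ≠ 0 := by
      have h1M : (1:ℝ) < M := by exact_mod_cast hM
      exact ne_of_gt (by linarith)
    have h1 : (M:ℝ)/((M:ℝ)-1) = 1 + 1/((M:ℝ)-1) := by
      rw [one_add_div hne]; congr 1
    linarith

end AuxLemmas

theorem stmt_0 (d M : ℕ) (hM : 1 < M) (hMd : M ≤ d + 1)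
    (φ ψ : ℝ → ℝ)
    (hφmono : Monotone φ) (hφconv : ConvexOn ℝ Set.univ φ)
    (hψmono : Monotone ψ)
    (hψφconv : ∀ α : ℝ, 0 < α → ConvexOn ℝ Set.univ (fun x => ψ (α * φ x))) :
    -- every aligned regular-simplex configuration attains the minimum
    (∀ U V : Fin M → EuclideanSpace ℝ (Fin d),
        (∀ i, ‖U i‖ = 1) → (∀ i, ‖V i‖ = 1) →
        (∀ i, U i = V i) →
        (∀ i j, i ≠ j → ⟪U i, U j⟫ = -1 / ((M : ℝ) - 1)) →
        ∀ U' V' : Fin M → EuclideanSpace ℝ (Fin d),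
          (∀ i, ‖U' i‖ = 1) → (∀ i, ‖V' i‖ = 1) →
          LaSym d M φ ψ U V ≤ LaSym d M φ ψ U' V') ∧
    -- under strictness, these are the only minimizers
    (StrictMono φ → StrictMono ψ → StrictConvexOn ℝ Set.univ φ →
      ∀ U V : Fin M → EuclideanSpace ℝ (Fin d),
        (∀ i, ‖U i‖ = 1) → (∀ i, ‖V i‖ = 1) →
        (∀ U' V' : Fin M → EuclideanSpace ℝ (Fin d),
          (∀ i, ‖U' i‖ = 1) → (∀ i, ‖V' i‖ = 1) →
          LaSym d M φ ψ U V ≤ LaSym d M φ ψ U' V') →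
        (∀ i, U i = V i) ∧
        (∀ i j, i ≠ j → ⟪U i, U j⟫ = -1 / ((M : ℝ) - 1))) := by
  constructor
  · intro U V hU hV hUVeq hsimp U' V' hU' hV'
    rw [LaSym_simplex hM U V hU hUVeq hsimp]
    exact (master hM hφmono hφconv hψmono hψφconv U' V' hU' hV').1
  · intro hφs hψs hφsc U V hU hV hmin
    obtain ⟨W, hW1, hW2⟩ := exists_simplex d M hM hMd
    have hWB : LaSym d M φ ψ W W = ψ (((M:ℝ) - 1) * φ (-(M:ℝ) / ((M:ℝ) - 1))) :=
      LaSym_simplex hM W W hW1 (fun i => rfl) hW2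
    have hle : LaSym d M φ ψ U V ≤ ψ (((M:ℝ) - 1) * φ (-(M:ℝ) / ((M:ℝ) - 1))) := by
      rw [← hWB]; exact hmin W W hW1 hW1
    have hge := (master hM hφmono hφconv hψmono hψφconv U V hU hV).1
    exact (master hM hφmono hφconv hψmono hψφconv U V hU hV).2
      (le_antisymm hle hge) hφs hψs hφsc
end
end

section
/- Let φ : ℝ → ℝ be increasing and convex, and let ψ : ℝ → ℝ be increasing such that x ↦ ψ(α·φ(x)) is convex for every α > 0. Let M ≥ 2 and let u_1,…,u_M, v_1,…,v_M ∈ ℝ^d; set u = Σ_i u_i and v = Σ_i v_i. Then (1/M) Σ_{i=1}^M ψ( Σ_{j≠i} φ((v_j − v_i)·u_i) ) ≥ ψ( (M−1) · φ( (v·u − M Σ_{i=1}^M v_i·u_i) / (M(M−1)) ) ). -/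
open scoped BigOperators RealInnerProductSpace

theorem stmt_13 (d M : ℕ) (hM : 2 ≤ M)
    (φ ψ : ℝ → ℝ)
    (hφmono : Monotone φ) (hφconv : ConvexOn ℝ Set.univ φ)
    (hψmono : Monotone ψ)
    (hψφconv : ∀ α : ℝ, 0 < α → ConvexOn ℝ Set.univ (fun x => ψ (α * φ x)))
    (U V : Fin M → EuclideanSpace ℝ (Fin d)) :
    (1 / (M : ℝ)) * ∑ i, ψ (∑ j ∈ Finset.univ.erase i, φ ⟪V j - V i, U i⟫) ≥
      ψ (((M : ℝ) - 1) *
        φ ((⟪∑ i, V i, ∑ i, U i⟫ - (M : ℝ) * ∑ i, ⟪V i, U i⟫) /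
          ((M : ℝ) * ((M : ℝ) - 1)))) := by
  have hM1 : (1 : ℝ) < (M : ℝ) := by exact_mod_cast lt_of_lt_of_le one_lt_two hM
  have hMpos : (0 : ℝ) < M := by linarith
  have hM1pos : (0 : ℝ) < (M : ℝ) - 1 := by linarith
  set x : Fin M → ℝ := fun i => ∑ j ∈ Finset.univ.erase i, ⟪V j - V i, U i⟫ with hx
  set g : ℝ → ℝ := fun t => ψ (((M : ℝ) - 1) * φ t) with hg
  have hgconv : ConvexOn ℝ Set.univ g := hψφconv _ hM1pos
  -- Step A: inner Jensen on each i
  have stepA : ∀ i, g (x i / ((M : ℝ) - 1)) ≤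
      ψ (∑ j ∈ Finset.univ.erase i, φ ⟪V j - V i, U i⟫) := by
    intro i
    apply hψmono
    have hcard : ((Finset.univ.erase i).card : ℝ) = (M : ℝ) - 1 := by
      rw [Finset.card_erase_of_mem (Finset.mem_univ i), Finset.card_univ, Fintype.card_fin]
      push_cast [Nat.cast_sub (le_trans one_le_two hM)]
      ring
    have hjensen := hφconv.map_sum_le (t := Finset.univ.erase i)
      (w := fun _ => ((M : ℝ) - 1)⁻¹) (p := fun j => ⟪V j - V i, U i⟫)
      (fun _ _ => by positivity)
      (by rw [Finset.sum_const, nsmul_eq_mul, hcard, mul_inv_cancel₀ hM1pos.ne'])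
      (fun _ _ => Set.mem_univ _)
    have h1 : φ (x i / ((M : ℝ) - 1)) ≤ (((M : ℝ) - 1))⁻¹ * ∑ j ∈ Finset.univ.erase i,
        φ ⟪V j - V i, U i⟫ := by
      simp only [smul_eq_mul, ← Finset.mul_sum] at hjensen
      rw [div_eq_inv_mul]
      exact hjensen
    calc ((M : ℝ) - 1) * φ (x i / ((M : ℝ) - 1))
        ≤ ((M : ℝ) - 1) * ((((M : ℝ) - 1))⁻¹ * ∑ j ∈ Finset.univ.erase i,
            φ ⟪V j - V i, U i⟫) := by
          exact mul_le_mul_of_nonneg_left h1 hM1pos.le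
      _ = ∑ j ∈ Finset.univ.erase i, φ ⟪V j - V i, U i⟫ := by
          field_simp
  -- Step B: outer Jensen for g
  have stepB := hgconv.map_sum_le (t := (Finset.univ : Finset (Fin M)))
    (w := fun _ => (M : ℝ)⁻¹) (p := fun i => x i / ((M : ℝ) - 1))
    (fun _ _ => by positivity)
    (by rw [Finset.sum_const, nsmul_eq_mul, Finset.card_univ, Fintype.card_fin,
        mul_inv_cancel₀ hMpos.ne'])
    (fun _ _ => Set.mem_univ _)
  -- Step C: sum of x i equals S
  have stepC : ∑ i, x i = ⟪∑ i, V i, ∑ i, U i⟫ - (M : ℝ) * ∑ i, ⟪V i, U i⟫ := by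
    have : ∀ i : Fin M, x i = ⟪∑ j, V j, U i⟫ - (M : ℝ) * ⟪V i, U i⟫ := by
      intro i
      have h1 : (⟪∑ j, V j, U i⟫ : ℝ) = ∑ j, ⟪V j, U i⟫ := sum_inner _ _ _
      have h2 : ∑ j, (⟪V j, U i⟫ : ℝ) = (∑ j ∈ Finset.univ.erase i, ⟪V j, U i⟫) + ⟪V i, U i⟫ :=
        (Finset.sum_erase_add _ _ (Finset.mem_univ i)).symm
      rw [hx]
      simp only [inner_sub_left]
      rw [Finset.sum_sub_distrib, Finset.sum_const, Finset.card_erase_of_mem (Finset.mem_univ i),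
        Finset.card_univ, Fintype.card_fin, h1, h2, nsmul_eq_mul]
      have hM' : (1:ℕ) ≤ M := le_trans one_le_two hM
      push_cast [Nat.cast_sub hM']
      ring
    rw [Finset.sum_congr rfl (fun i _ => this i), Finset.sum_sub_distrib, ← Finset.mul_sum,
      ← inner_sum]
  have key : ∑ i, (M : ℝ)⁻¹ • (x i / ((M : ℝ) - 1)) =
      (⟪∑ i, V i, ∑ i, U i⟫ - (M : ℝ) * ∑ i, ⟪V i, U i⟫) / ((M : ℝ) * ((M : ℝ) - 1)) := by
    simp only [smul_eq_mul, ← Finset.mul_sum, ← Finset.sum_div]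
    rw [stepC]; field_simp
  have final : ψ (((M : ℝ) - 1) *
      φ ((⟪∑ i, V i, ∑ i, U i⟫ - (M : ℝ) * ∑ i, ⟪V i, U i⟫) / ((M : ℝ) * ((M : ℝ) - 1)))) ≤
      ∑ i, (M : ℝ)⁻¹ * g (x i / ((M : ℝ) - 1)) := by
    have := stepB
    rw [key] at this
    simpa [hg, smul_eq_mul] using this
  have final2 : ∑ i, (M : ℝ)⁻¹ * g (x i / ((M : ℝ) - 1)) ≤
      (1 / (M : ℝ)) * ∑ i, ψ (∑ j ∈ Finset.univ.erase i, φ ⟪V j - V i, U i⟫) := by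
    rw [one_div, Finset.mul_sum]
    exact Finset.sum_le_sum fun i _ =>
      mul_le_mul_of_nonneg_left (stepA i) (by positivity)
  exact le_trans final final2
end

section
/- Let M ≥ 2, let d ≥ 1 and let u_1,…,u_M, v_1,…,v_M be unit vectors in ℝ^d. Then M Σ_{i=1}^M (v_i·u_i) − (Σ_{i=1}^M v_i)·(Σ_{i=1}^M u_i) ≤ M². Moreover, equality holds if and only if Σ_{i=1}^M u_i = 0 and v_i = u_i for every i. -/
open scoped BigOperators RealInnerProductSpace

theorem stmt_14 (d M : ℕ) (hM : 2 ≤ M) (hd : 1 ≤ d)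
    (U V : Fin M → EuclideanSpace ℝ (Fin d))
    (hU : ∀ i, ‖U i‖ = 1) (hV : ∀ i, ‖V i‖ = 1) :
    ((M : ℝ) * ∑ i, ⟪V i, U i⟫ - ⟪∑ i, V i, ∑ i, U i⟫ ≤ (M : ℝ) ^ 2) ∧
      ((M : ℝ) * ∑ i, ⟪V i, U i⟫ - ⟪∑ i, V i, ∑ i, U i⟫ = (M : ℝ) ^ 2 ↔
        (∑ i, U i = 0 ∧ ∀ i, V i = U i)) := by
  set w : Fin M → EuclideanSpace ℝ (Fin d) := fun i => V i - U i with hw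
  set S : EuclideanSpace ℝ (Fin d) := ∑ i, U i with hS
  set T : EuclideanSpace ℝ (Fin d) := ∑ i, V i with hT
  set P : ℝ := ∑ i, ⟪V i, U i⟫ with hP
  have hMpos : (0:ℝ) < M := by positivity
  -- Lemma B : ∑ ‖w i‖² = 2M - 2P
  have hB : ∑ i, ‖w i‖ ^ 2 = 2 * M - 2 * P := by
    have : ∀ i, ‖w i‖ ^ 2 = 2 - 2 * ⟪V i, U i⟫ := by
      intro i
      rw [hw]
      simp [norm_sub_sq_real, hU i, hV i]
      ring
    calc ∑ i, ‖w i‖ ^ 2 = ∑ i : Fin M, (2 - 2 * ⟪V i, U i⟫) :=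
          Finset.sum_congr rfl fun i _ => this i
      _ = (M : ℝ) * 2 - 2 * P := by
          rw [Finset.sum_sub_distrib, Finset.sum_const, ← Finset.mul_sum, ← hP]
          simp [mul_comm]
      _ = 2 * M - 2 * P := by ring
  -- sum of w
  have hsumw : ∑ i, w i = T - S := by
    rw [hw, hS, hT, Finset.sum_sub_distrib]
  -- Lemma A : double sum
  have hA : ∑ i, ∑ j, ‖w i - w j‖ ^ 2
      = 2 * M * (∑ i, ‖w i‖ ^ 2) - 2 * ‖∑ i, w i‖ ^ 2 := by
    have h1 : ∀ i j, ‖w i - w j‖ ^ 2 = ‖w i‖ ^ 2 - 2 * ⟪w i, w j⟫ + ‖w j‖ ^ 2 :=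
      fun i j => norm_sub_sq_real _ _
    have h2 : ‖∑ i, w i‖ ^ 2 = ∑ i, ∑ j, ⟪w i, w j⟫ := by
      rw [← real_inner_self_eq_norm_sq, sum_inner]
      exact Finset.sum_congr rfl fun i _ => inner_sum _ _ _
    calc ∑ i, ∑ j, ‖w i - w j‖ ^ 2
        = ∑ i, ∑ j, (‖w i‖ ^ 2 - 2 * ⟪w i, w j⟫ + ‖w j‖ ^ 2) := by
          exact Finset.sum_congr rfl fun i _ => Finset.sum_congr rfl fun j _ => h1 i j
      _ = 2 * M * (∑ i, ‖w i‖ ^ 2) - 2 * ‖∑ i, w i‖ ^ 2 := by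
          simp only [Finset.sum_add_distrib, Finset.sum_sub_distrib, Finset.sum_const,
            Finset.card_univ, Fintype.card_fin, nsmul_eq_mul, ← Finset.mul_sum, h2]
          ring
  -- inner of sums
  have hTS : ‖T - S‖ ^ 2 = ‖T‖ ^ 2 - 2 * ⟪T, S⟫ + ‖S‖ ^ 2 := norm_sub_sq_real _ _
  -- key identity
  have key : (M : ℝ) * P - ⟪T, S⟫
      = (M : ℝ) ^ 2 - ‖S‖ ^ 2 / 2 - ‖T‖ ^ 2 / 2
        - (1 / 4) * ∑ i, ∑ j, ‖w i - w j‖ ^ 2 := by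
    rw [hA, hsumw, hB, hTS]; ring
  have hdnn : (0:ℝ) ≤ ∑ i, ∑ j, ‖w i - w j‖ ^ 2 :=
    Finset.sum_nonneg fun i _ => Finset.sum_nonneg fun j _ => sq_nonneg _
  constructor
  · rw [key]
    have h1 : (0:ℝ) ≤ ‖S‖ ^ 2 := sq_nonneg _
    have h2 : (0:ℝ) ≤ ‖T‖ ^ 2 := sq_nonneg _
    linarith
  · constructor
    · intro heq
      rw [key] at heq
      have h1 : (0:ℝ) ≤ ‖S‖ ^ 2 := sq_nonneg _
      have h2 : (0:ℝ) ≤ ‖T‖ ^ 2 := sq_nonneg _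
      have hS0 : ‖S‖ ^ 2 = 0 := by linarith
      have hT0 : ‖T‖ ^ 2 = 0 := by linarith
      have hD0 : ∑ i, ∑ j, ‖w i - w j‖ ^ 2 = 0 := by linarith
      have hS0' : S = 0 := by
        have := pow_eq_zero_iff (n := 2) (by norm_num) |>.mp hS0
        simpa using this
      have hT0' : T = 0 := by
        have := pow_eq_zero_iff (n := 2) (by norm_num) |>.mp hT0
        simpa using this
      have hww : ∀ i j, w i = w j := by
        intro i j
        have h := (Finset.sum_eq_zero_iff_of_nonneg (fun i _ => Finset.sum_nonneg fun j _ => sq_nonneg _)).mp hD0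
          i (Finset.mem_univ i)
        have h' := (Finset.sum_eq_zero_iff_of_nonneg (fun j _ => sq_nonneg _)).mp h
          j (Finset.mem_univ j)
        have := pow_eq_zero_iff (n := 2) (by norm_num) |>.mp h'
        rw [norm_eq_zero, sub_eq_zero] at this
        exact this
      have hW0 : ∑ i, w i = 0 := by rw [hsumw, hS0', hT0', sub_zero]
      have hwz : ∀ i, w i = 0 := by
        intro i
        have : ∑ j, w j = (M : ℕ) • w i := by
          rw [Finset.sum_congr rfl fun j _ => hww j i]
          simp
        rw [hW0] at this
        have hM0 : (M : ℕ) ≠ 0 := by omega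
        rw [← Nat.cast_smul_eq_nsmul ℝ] at this
        exact (smul_eq_zero.mp this.symm).resolve_left (by exact_mod_cast hM0)
      refine ⟨hS0', fun i => ?_⟩
      have := hwz i
      rw [hw] at this
      simpa [sub_eq_zero] using this
    · rintro ⟨h0, hVU⟩
      have hSS : S = 0 := h0
      have hPV : P = M := by
        rw [hP, Finset.sum_congr rfl fun i _ => by
          rw [hVU i, real_inner_self_eq_norm_sq, hU i]]
        simp
      have hTT : ⟪T, S⟫ = 0 := by rw [hSS, inner_zero_right]
      rw [hPV, hTT]
      ring
end

section
/- Let M ≥ 2, d ≥ 1 and let u_1,…,u_M, v_1,…,v_M be unit vectors in ℝ^d. Then (2M−1) Σ_{i=1}^M (v_i + u_i)·u_i − (Σ_{i=1}^M (v_i + u_i))·(Σ_{j=1}^M u_j) ≤ 2M(2M−1). -/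
open scoped BigOperators RealInnerProductSpace

section aux

variable {E : Type*} [NormedAddCommGroup E] [InnerProductSpace ℝ E]

lemma polar_aux (x y : E) : ⟪x, y⟫ = (‖x + y‖ ^ 2 - ‖x - y‖ ^ 2) / 4 := by
  rw [@norm_add_sq_real, @norm_sub_sq_real]; ring

lemma norm_sum_sq_le {M : ℕ} (z : Fin M → E) :
    ‖∑ i, z i‖ ^ 2 ≤ (M : ℝ) * ∑ i, ‖z i‖ ^ 2 := by
  calc ‖∑ i, z i‖ ^ 2 ≤ (∑ i, ‖z i‖) ^ 2 := by
        have h1 := norm_sum_le Finset.univ z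
        exact pow_le_pow_left₀ (norm_nonneg _) h1 2
    _ ≤ (M : ℝ) * ∑ i, ‖z i‖ ^ 2 := by
        have := sq_sum_le_card_mul_sum_sq (s := (Finset.univ : Finset (Fin M)))
          (f := fun i => ‖z i‖)
        simpa using this

lemma key_bound {M : ℕ} (c : ℝ) (hc : (M : ℝ) ≤ c) (x y : Fin M → E) :
    c * ∑ i, ⟪x i, y i⟫ - ⟪∑ i, x i, ∑ i, y i⟫ ≤
      c * (∑ i, ‖x i‖ ^ 2 + ∑ i, ‖y i‖ ^ 2) / 2 := by
  have hxy : ∑ i, ⟪x i, y i⟫ = (∑ i, ‖x i + y i‖ ^ 2 - ∑ i, ‖x i - y i‖ ^ 2) / 4 := by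
    rw [← Finset.sum_sub_distrib, Finset.sum_div]
    exact Finset.sum_congr rfl fun i _ => polar_aux _ _
  have hSS : ⟪∑ i, x i, ∑ i, y i⟫ =
      (‖∑ i, (x i + y i)‖ ^ 2 - ‖∑ i, (x i - y i)‖ ^ 2) / 4 := by
    rw [Finset.sum_add_distrib, Finset.sum_sub_distrib]
    exact polar_aux _ _
  have h1 : ‖∑ i, (x i - y i)‖ ^ 2 ≤ (M : ℝ) * ∑ i, ‖x i - y i‖ ^ 2 :=
    norm_sum_sq_le _
  have h2 : (0:ℝ) ≤ ‖∑ i, (x i + y i)‖ ^ 2 := sq_nonneg _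
  have h3 : ∑ i, ‖x i + y i‖ ^ 2 ≤ 2 * (∑ i, ‖x i‖ ^ 2 + ∑ i, ‖y i‖ ^ 2) := by
    calc ∑ i, ‖x i + y i‖ ^ 2 ≤ ∑ i, (2 * (‖x i‖ ^ 2 + ‖y i‖ ^ 2)) := by
          refine Finset.sum_le_sum fun i _ => ?_
          have := parallelogram_law_with_norm ℝ (x i) (y i)
          nlinarith [sq_nonneg (‖x i - y i‖)]
      _ = 2 * (∑ i, ‖x i‖ ^ 2 + ∑ i, ‖y i‖ ^ 2) := by
          rw [mul_add, Finset.mul_sum, Finset.mul_sum, ← Finset.sum_add_distrib]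
          exact Finset.sum_congr rfl fun i _ => by ring
  have h4 : (0:ℝ) ≤ ∑ i, ‖x i - y i‖ ^ 2 :=
    Finset.sum_nonneg fun i _ => sq_nonneg _
  have hc0 : (0:ℝ) ≤ c := le_trans (Nat.cast_nonneg M) hc
  rw [hxy, hSS]
  nlinarith [mul_le_mul_of_nonneg_left h3 hc0,
    mul_le_mul_of_nonneg_right (sub_nonneg.mpr hc) h4]

end aux

theorem stmt_16 (d M : ℕ) (hM : 2 ≤ M) (hd : 1 ≤ d)
    (U V : Fin M → EuclideanSpace ℝ (Fin d))
    (hU : ∀ i, ‖U i‖ = 1) (hV : ∀ i, ‖V i‖ = 1) :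
    (2 * (M : ℝ) - 1) * ∑ i, ⟪V i + U i, U i⟫ -
        ⟪∑ i, (V i + U i), ∑ j, U j⟫ ≤
      2 * (M : ℝ) * (2 * (M : ℝ) - 1) := by
  set c : ℝ := 2 * (M : ℝ) - 1 with hcdef
  have hM1 : (1:ℝ) ≤ (M : ℝ) := by exact_mod_cast le_trans (by norm_num) hM
  have hc : (M : ℝ) ≤ c := by simp only [hcdef]; linarith
  set x : Fin M → EuclideanSpace ℝ (Fin d) := fun i => V i + U i with hx
  set y : Fin M → EuclideanSpace ℝ (Fin d) := fun i => (2:ℝ) • U i with hy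
  have key := key_bound c hc x y
  have e1 : ∑ i, ⟪x i, y i⟫ = 2 * ∑ i, ⟪x i, U i⟫ := by
    rw [Finset.mul_sum]
    refine Finset.sum_congr rfl fun i _ => ?_
    show ⟪x i, (2:ℝ) • U i⟫ = 2 * ⟪x i, U i⟫
    exact real_inner_smul_right _ _ _
  have e2 : ⟪∑ i, x i, ∑ i, y i⟫ = 2 * ⟪∑ i, x i, ∑ j, U j⟫ := by
    rw [← Finset.smul_sum, real_inner_smul_right]
  have hxn : ∑ i, ‖x i‖ ^ 2 ≤ 4 * (M : ℝ) := by
    calc ∑ i, ‖x i‖ ^ 2 ≤ ∑ _i : Fin M, (4:ℝ) := by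
          refine Finset.sum_le_sum fun i _ => ?_
          have : ‖x i‖ ≤ 2 := by
            calc ‖x i‖ ≤ ‖V i‖ + ‖U i‖ := norm_add_le _ _
              _ = 2 := by rw [hU i, hV i]; norm_num
          nlinarith [norm_nonneg (x i)]
      _ = 4 * (M : ℝ) := by simp [Finset.sum_const]; ring
  have hyn : ∑ i, ‖y i‖ ^ 2 = 4 * (M : ℝ) := by
    have : ∀ i, ‖y i‖ ^ 2 = 4 := fun i => by
      simp [hy, norm_smul, hU i]; norm_num
    simp [this, Finset.sum_const]; ring
  rw [e1, e2] at key
  simp only [hx] at key hxn ⊢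
  have hc0 : (0:ℝ) ≤ c := le_trans (Nat.cast_nonneg M) hc
  rw [hyn] at key
  have hPP := mul_le_mul_of_nonneg_left hxn hc0
  ring_nf at key hPP ⊢
  linarith [key, hPP]
end
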